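/- Let p be prime and a, b ∈ {0,...,p-1} distinct, m, n ∈ {1,...,p-2}. Then the sum over k from 0 to p-1, excluding k ≡ -a and k ≡ -b mod p, of (a+k)^m / (b+k)^n is congruent mod p to -(a-b)^(m-n) · C(m,n), where (a-b)^(m-n) with negative exponent means the inverse of (a-b)^(n-m) mod p. -/

import Mathlib

open Finset

-- helper 1: sum over range p of F ∘ cast, filtered, = sum over ZMod p filtered
lemma sum_range_zmod {p : ℕ} [NeZero p] (F : ZMod p → ZMod p) (Q : ZMod p → Prop)
    [DecidablePred Q] :
    ∑ k ∈ (Finset.range p).filter (fun (k : ℕ) => Q (k : ZMod p)), F (k : ZMod p)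
      = ∑ x ∈ Finset.univ.filter Q, F x := by
  refine Finset.sum_nbij' (fun k => (k : ZMod p)) (fun x => x.val) ?_ ?_ ?_ ?_ ?_
  · intro a ha
    simp only [mem_filter, mem_range] at ha ⊢
    exact ⟨mem_univ _, ha.2⟩
  · intro x hx
    simp only [mem_filter, mem_range] at hx ⊢
    exact ⟨ZMod.val_lt x, by rw [ZMod.natCast_val, ZMod.cast_id]; exact hx.2⟩
  · intro a ha
    simp only [mem_filter, mem_range] at ha
    exact ZMod.val_natCast_of_lt ha.1
  · intro x hx
    simp [ZMod.natCast_val, ZMod.cast_id]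
  · intro a ha
    rfl

lemma sum_nonzero_pow (p : ℕ) [Fact p.Prime] (i : ℕ) :
    ∑ x ∈ Finset.univ.filter (fun x : ZMod p => x ≠ 0), x ^ i
      = if (p - 1) ∣ i then -1 else 0 := by
  classical
  have h1 : ∑ x ∈ Finset.univ.filter (fun x : ZMod p => x ≠ 0), x ^ i
      = ∑ u : (ZMod p)ˣ, ((u : ZMod p)) ^ i := by
    refine (Finset.sum_nbij (fun u : (ZMod p)ˣ => (u : ZMod p)) ?_ ?_ ?_ ?_).symm
    · intro u _
      simp [Units.ne_zero]
    · intro u _ v _ h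
      exact Units.ext h
    · intro x hx
      simp only [Finset.coe_filter, Set.mem_setOf_eq, Finset.mem_univ, true_and] at hx
      exact ⟨Units.mk0 x hx, by simp⟩
    · intro u _
      rfl
  rw [h1]
  have := FiniteField.sum_pow_units (ZMod p) i
  rwa [ZMod.card p] at this

theorem sum_ratio_shifted (p a b m n : ℕ) [Fact p.Prime]
    (ha : a ≤ p - 1) (hb : b ≤ p - 1) (hab : a ≠ b)
    (hm : 1 ≤ m ∧ m ≤ p - 2) (hn : 1 ≤ n ∧ n ≤ p - 2) :
    (∑ k ∈ (Finset.range p).filter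
        (fun (k : ℕ) => (k : ZMod p) ≠ -(a : ZMod p) ∧ (k : ZMod p) ≠ -(b : ZMod p)),
        ((a : ZMod p) + (k : ZMod p)) ^ m * (((b : ZMod p) + (k : ZMod p)) ^ n)⁻¹) =
      -((a : ZMod p) - (b : ZMod p)) ^ ((m : ℤ) - (n : ℤ)) * (m.choose n : ZMod p) := by
  classical
  obtain ⟨hm1, hm2⟩ := hm
  obtain ⟨hn1, hn2⟩ := hn
  have hp : p.Prime := Fact.out
  have hp3 : 3 ≤ p := by have := hp.two_le; omega
  set d : ZMod p := (a : ZMod p) - b with hd_def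
  have hd : d ≠ 0 := by
    have hap : a < p := by omega
    have hbp : b < p := by omega
    intro h
    apply hab
    have h1 : (a : ZMod p) = b := sub_eq_zero.mp h
    have h2 := congrArg ZMod.val h1
    rwa [ZMod.val_natCast_of_lt hap, ZMod.val_natCast_of_lt hbp] at h2
  have step1 := sum_range_zmod (p := p)
      (fun x => ((a : ZMod p) + x) ^ m * (((b : ZMod p) + x) ^ n)⁻¹)
      (fun x => x ≠ -(a : ZMod p) ∧ x ≠ -(b : ZMod p))
  rw [step1]
  have step2 : ∑ x ∈ Finset.univ.filter
        (fun x : ZMod p => x ≠ -(a : ZMod p) ∧ x ≠ -(b : ZMod p)),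
        ((a : ZMod p) + x) ^ m * (((b : ZMod p) + x) ^ n)⁻¹
      = ∑ y ∈ Finset.univ.filter
        (fun y : ZMod p => y ≠ (b : ZMod p) - a ∧ y ≠ 0),
        (y + d) ^ m * (y ^ n)⁻¹ := by
    refine Finset.sum_nbij' (fun x => x + b) (fun y => y - b) ?_ ?_ ?_ ?_ ?_
    · intro x hx
      simp only [Finset.mem_filter, Finset.mem_univ, true_and] at hx ⊢
      refine ⟨fun h => hx.1 (by linear_combination h), fun h => hx.2 (by linear_combination h)⟩
    · intro y hy
      simp only [Finset.mem_filter, Finset.mem_univ, true_and] at hy ⊢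
      refine ⟨fun h => hy.1 (by linear_combination h), fun h => hy.2 (by linear_combination h)⟩
    · intro x _; ring
    · intro y _; ring
    · intro x _
      rw [show (a : ZMod p) + x = (x + b) + d by rw [hd_def]; ring,
        show (b : ZMod p) + x = x + b by ring]
  rw [step2]
  have step3 : ∑ y ∈ Finset.univ.filter
        (fun y : ZMod p => y ≠ (b : ZMod p) - a ∧ y ≠ 0),
        (y + d) ^ m * (y ^ n)⁻¹
      = ∑ y ∈ Finset.univ.filter (fun y : ZMod p => y ≠ 0),
        (y + d) ^ m * (y ^ n)⁻¹ := by
    apply Finset.sum_subset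
    · intro y hy
      simp only [Finset.mem_filter, Finset.mem_univ, true_and] at hy ⊢
      exact hy.2
    · intro y hy hny
      simp only [Finset.mem_filter, Finset.mem_univ, true_and] at hy hny
      have hyval : y = (b : ZMod p) - a := by
        by_contra h
        exact hny ⟨h, hy⟩
      have : y + d = 0 := by rw [hyval, hd_def]; ring
      rw [this, zero_pow (by omega : m ≠ 0), zero_mul]
  rw [step3]
  have hinv : ∀ y : ZMod p, y ≠ 0 → ((y : ZMod p) ^ n)⁻¹ = y ^ (p - 1 - n) := by
    intro y hy
    refine inv_eq_of_mul_eq_one_right ?_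
    rw [← pow_add, show n + (p - 1 - n) = p - 1 by omega]
    exact ZMod.pow_card_sub_one_eq_one hy
  have step4 : ∑ y ∈ Finset.univ.filter (fun y : ZMod p => y ≠ 0),
        (y + d) ^ m * (y ^ n)⁻¹
      = ∑ j ∈ Finset.range (m + 1), (m.choose j : ZMod p) * d ^ (m - j) *
          (if (p - 1) ∣ (j + (p - 1 - n)) then (-1 : ZMod p) else 0) := by
    calc ∑ y ∈ Finset.univ.filter (fun y : ZMod p => y ≠ 0), (y + d) ^ m * (y ^ n)⁻¹
        = ∑ y ∈ Finset.univ.filter (fun y : ZMod p => y ≠ 0),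
            ∑ j ∈ Finset.range (m + 1),
              (m.choose j : ZMod p) * d ^ (m - j) * y ^ (j + (p - 1 - n)) := by
          apply Finset.sum_congr rfl
          intro y hy
          have hy0 : y ≠ 0 := by simpa using hy
          rw [hinv y hy0, add_pow, Finset.sum_mul]
          apply Finset.sum_congr rfl
          intro j _
          rw [pow_add]
          ring
      _ = ∑ j ∈ Finset.range (m + 1), (m.choose j : ZMod p) * d ^ (m - j) *
            ∑ y ∈ Finset.univ.filter (fun y : ZMod p => y ≠ 0), y ^ (j + (p - 1 - n)) := by
          rw [Finset.sum_comm]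
          exact Finset.sum_congr rfl (fun j _ => by rw [Finset.mul_sum])
      _ = _ := by
          apply Finset.sum_congr rfl
          intro j _
          rw [sum_nonzero_pow]
  rw [step4]
  have hcond : ∀ j ∈ Finset.range (m + 1),
      (m.choose j : ZMod p) * d ^ (m - j) *
          (if (p - 1) ∣ (j + (p - 1 - n)) then (-1 : ZMod p) else 0)
        = if j = n then -((m.choose j : ZMod p) * d ^ (m - j)) else 0 := by
    intro j hj
    rw [Finset.mem_range] at hj
    have hiff : (p - 1) ∣ (j + (p - 1 - n)) ↔ j = n := by
      constructor
      · intro hdvd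
        have h1 : p - 1 ≤ j + (p - 1 - n) := Nat.le_of_dvd (by omega) hdvd
        have h2 : (p - 1) ∣ (j + (p - 1 - n) - (p - 1)) := Nat.dvd_sub hdvd dvd_rfl
        have h3 : j + (p - 1 - n) - (p - 1) < p - 1 := by omega
        have h4 : j + (p - 1 - n) - (p - 1) = 0 := Nat.eq_zero_of_dvd_of_lt h2 h3
        omega
      · intro h
        rw [h, show n + (p - 1 - n) = p - 1 by omega]
    simp only [hiff]
    split_ifs <;> ring
  rw [Finset.sum_congr rfl hcond, Finset.sum_ite_eq' (Finset.range (m + 1)) n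
    (fun j => -((m.choose j : ZMod p) * d ^ (m - j)))]
  by_cases hnm : n ≤ m
  · rw [if_pos (Finset.mem_range.mpr (by omega))]
    have hz : d ^ ((m : ℤ) - (n : ℤ)) = d ^ (m - n) := by
      rw [show (m : ℤ) - (n : ℤ) = ((m - n : ℕ) : ℤ) by omega, zpow_natCast]
    rw [hz]
    ring
  · rw [if_neg (by simp; omega)]
    rw [Nat.choose_eq_zero_of_lt (by omega)]
    simp
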